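/- Let m be odd. There exists a function f from ordered pairs of distinct elements of Sym(m) to {1,...,m} such that f(x,y) = f(y,x) for all x ≠ y, and f(xg, yg) = g(f(x,y)) for all x ≠ y and all g in Sym(m). -/
import Mathlib


/-- For odd `m` there is a symmetric function `f` on pairs of distinct elements of
`Sym(m)` with values in the colours `{1,…,m}`, equivariant for the right regular
action on pairs and the natural action on colours.  (In Mathlib's composition
convention, the right translate `xg` of the permutation literature corresponds to
`g * x`, since colours satisfy `(g * x) c = g (x c)`.) -/
theorem exists_equivariant_colouring (m : ℕ) (hm : Odd m) :
    ∃ f : Equiv.Perm (Fin m) → Equiv.Perm (Fin m) → Fin m,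
      (∀ x y, x ≠ y → f x y = f y x) ∧
      (∀ x y, x ≠ y → ∀ g : Equiv.Perm (Fin m), f (g * x) (g * y) = g (f x y)) := by
  classical
  haveI : Fact (Nat.Prime 2) := ⟨Nat.prime_two⟩
  have hm1 : 0 < m := hm.pos
  have c : Fin m := ⟨0, hm1⟩
  -- fixed points for involutions
  have hfix : ∀ w : Equiv.Perm (Fin m), w * w = 1 → ∃ p, w p = p := by
    intro w hw
    apply Equiv.Perm.exists_fixed_point_of_prime (p := 2) (n := 1)
    · simpa [Fintype.card_fin] using hm.not_two_dvd_nat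
    · simpa [pow_two] using hw
  -- an arbitrary linear embedding to break ties
  let e := Fintype.equivFin (Equiv.Perm (Fin m))
  let F : Equiv.Perm (Fin m) → Fin m := fun w =>
    if h : w = w⁻¹ then Classical.choose (hfix w (mul_eq_one_iff_eq_inv.mpr h))
    else if e w ≤ e w⁻¹ then c else w c
  have hF : ∀ w : Equiv.Perm (Fin m), F w = w (F w⁻¹) := by
    intro w
    by_cases h : w = w⁻¹
    · have hw : w * w = 1 := mul_eq_one_iff_eq_inv.mpr h
      have h2 : F w⁻¹ = F w := by rw [← h]
      rw [h2]
      simp only [F, dif_pos h]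
      exact (Classical.choose_spec (hfix w hw)).symm
    · have h' : ¬ w⁻¹ = w⁻¹⁻¹ := by simpa [inv_inv, eq_comm] using h
      have hne : e w ≠ e w⁻¹ := fun hc => h (e.injective hc)
      simp only [F, dif_neg h, dif_neg h', inv_inv]
      rcases lt_or_gt_of_ne hne with hlt | hgt
      · rw [if_pos hlt.le, if_neg (by simpa using hlt.not_ge)]
        simp
      · rw [if_neg (by simpa using hgt.not_ge), if_pos hgt.le]
  refine ⟨fun x y => x (F (x⁻¹ * y)), ?_, ?_⟩
  · intro x y hxy
    show x (F (x⁻¹ * y)) = y (F (y⁻¹ * x))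
    have key := hF (x⁻¹ * y)
    rw [key, mul_inv_rev, inv_inv]
    simp [Equiv.Perm.mul_apply]
  · intro x y hxy g
    show (g * x) (F ((g * x)⁻¹ * (g * y))) = g (x (F (x⁻¹ * y)))
    have h1 : (g * x)⁻¹ * (g * y) = x⁻¹ * y := by group
    rw [h1]
    simp [Equiv.Perm.mul_apply]
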